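/- Let L : ℂ² ⊗ ℂ² →ₗ[ℂ] ℂ be a linear functional and define G : ℝ → ℂ by G(θ) = L((e₀ + exp(iθ)·e₁) ⊗ (e₀ + exp(−iθ)·e₁)). Then (1/(2π)) · ∫_{−π}^{π} (G'(θ))² dθ = 2 · L(e₁ ⊗ e₀) · L(e₀ ⊗ e₁). (This computes, in a single closed form, the integral over one uniformly distributed parameter of the squared gradient of a circuit expectation; the two legs of L correspond to the positions of the ±θ spiders.) -/

import Mathlib

open MeasureTheory
open scoped TensorProduct

noncomputable section

/-- `ℂ²` with standard basis vectors. -/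
abbrev C2 : Type := ℂ × ℂ

def e0 : C2 := (1, 0)
def e1 : C2 := (0, 1)

lemma hasDerivAt_cexp_mul (c : ℂ) (θ : ℝ) :
    HasDerivAt (fun θ : ℝ => Complex.exp (c * θ)) (c * Complex.exp (c * θ)) θ := by
  have h1 : HasDerivAt (fun θ : ℝ => (θ : ℂ)) 1 θ := (hasDerivAt_id θ).ofReal_comp
  have h2 : HasDerivAt (fun θ : ℝ => c * (θ : ℂ)) c θ := by
    simpa using h1.const_mul c
  simpa [mul_comm] using h2.cexp

lemma integral_cexp_two (c : ℤ) (hc : c ≠ 0) :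
    (∫ θ in (-Real.pi)..Real.pi, Complex.exp ((2 * c * Complex.I) * θ)) = 0 := by
  have hne : (2 * (c : ℂ) * Complex.I) ≠ 0 := by
    simp [Complex.I_ne_zero, hc]
  rw [integral_exp_mul_complex hne]
  have h1 : (2 * (c : ℂ) * Complex.I) * (Real.pi : ℂ) = (c : ℤ) * (2 * Real.pi * Complex.I) := by
    push_cast; ring
  have h2 : (2 * (c : ℂ) * Complex.I) * ((-Real.pi : ℝ) : ℂ) = (-c : ℤ) * (2 * Real.pi * Complex.I) := by
    push_cast; ring
  rw [h1, h2, Complex.exp_int_mul_two_pi_mul_I, Complex.exp_int_mul_two_pi_mul_I]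
  simp

/-- integral over one uniformly distributed parameter of the
squared gradient of a circuit expectation, in closed form. -/
theorem integral_squared_gradient (L : C2 ⊗[ℂ] C2 →ₗ[ℂ] ℂ) (G : ℝ → ℂ)
    (hG : ∀ θ, G θ = L ((e0 + Complex.exp (Complex.I * (θ : ℂ)) • e1) ⊗ₜ[ℂ]
      (e0 + Complex.exp (-(Complex.I * (θ : ℂ))) • e1))) :
    (1 / (2 * Real.pi) : ℂ) * (∫ θ in (-Real.pi)..Real.pi, (deriv G θ) ^ 2) =
      2 * L (e1 ⊗ₜ[ℂ] e0) * L (e0 ⊗ₜ[ℂ] e1) := by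
  set a := L (e1 ⊗ₜ[ℂ] e0) with ha
  set b := L (e0 ⊗ₜ[ℂ] e1) with hb
  set c := L (e0 ⊗ₜ[ℂ] e0) + L (e1 ⊗ₜ[ℂ] e1) with hc
  -- expand G
  have hGexp : ∀ θ : ℝ, G θ = c + a * Complex.exp (Complex.I * θ)
      + b * Complex.exp (-(Complex.I * (θ : ℂ))) := by
    intro θ
    rw [hG θ]
    have hxy : Complex.exp (Complex.I * θ) * Complex.exp (-(Complex.I * (θ : ℂ))) = 1 := by
      rw [← Complex.exp_add]; simp
    simp only [TensorProduct.add_tmul, TensorProduct.tmul_add, ← TensorProduct.smul_tmul',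
      TensorProduct.tmul_smul, smul_smul, map_add, _root_.map_smul, smul_eq_mul]
    linear_combination L (e1 ⊗ₜ[ℂ] e1) * hxy
  -- derivative
  have hderiv : ∀ θ : ℝ, deriv G θ =
      Complex.I * a * Complex.exp (Complex.I * θ)
      - Complex.I * b * Complex.exp (-(Complex.I * (θ : ℂ))) := by
    intro θ
    have hd : HasDerivAt G (Complex.I * a * Complex.exp (Complex.I * θ)
        - Complex.I * b * Complex.exp (-(Complex.I * (θ : ℂ)))) θ := by
      have h1 := (hasDerivAt_cexp_mul Complex.I θ).const_mul a
      have h2 := (hasDerivAt_cexp_mul (-Complex.I) θ).const_mul b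
      have h := ((hasDerivAt_const θ c).add h1).add h2
      have hEq : (fun θ : ℝ => c + a * Complex.exp (Complex.I * θ)
          + b * Complex.exp (-Complex.I * θ)) = G := by
        funext t; rw [hGexp t]; ring_nf
      simp only [Pi.add_def] at h; rw [hEq] at h
      refine h.congr_deriv ?_
      ring_nf
    exact hd.deriv
  -- integrand
  have hint : ∀ θ : ℝ, (deriv G θ) ^ 2 =
      (-(a^2)) * Complex.exp ((2 * (1:ℤ) * Complex.I) * θ)
      + (-(b^2)) * Complex.exp ((2 * (-1:ℤ) * Complex.I) * θ)
      + 2 * a * b := by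
    intro θ
    rw [hderiv θ]
    have e1 : Complex.exp ((2 * (1:ℤ) * Complex.I) * θ)
        = Complex.exp (Complex.I * θ) * Complex.exp (Complex.I * θ) := by
      rw [← Complex.exp_add]; push_cast; ring_nf
    have e2 : Complex.exp ((2 * (-1:ℤ) * Complex.I) * θ)
        = Complex.exp (-(Complex.I * (θ:ℂ))) * Complex.exp (-(Complex.I * (θ:ℂ))) := by
      rw [← Complex.exp_add]; push_cast; ring_nf
    have e3 : Complex.exp (Complex.I * θ) * Complex.exp (-(Complex.I * (θ:ℂ))) = 1 := by
      rw [← Complex.exp_add]; simp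
    rw [e1, e2]
    linear_combination (a * Complex.exp (Complex.I * θ)
      - b * Complex.exp (-(Complex.I * (θ:ℂ))))^2 * Complex.I_sq + 2*a*b*e3
  -- rewrite the integral
  have hcongr : (∫ θ in (-Real.pi)..Real.pi, (deriv G θ) ^ 2)
      = ∫ θ in (-Real.pi)..Real.pi,
        ((-(a^2)) * Complex.exp ((2 * (1:ℤ) * Complex.I) * θ)
        + (-(b^2)) * Complex.exp ((2 * (-1:ℤ) * Complex.I) * θ)
        + 2 * a * b) :=
    intervalIntegral.integral_congr fun θ _ => hint θ
  have cont : ∀ k : ℂ, Continuous (fun θ : ℝ => Complex.exp (k * θ)) := fun k =>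
    Complex.continuous_exp.comp (continuous_const.mul Complex.continuous_ofReal)
  have i1 : IntervalIntegrable (fun θ : ℝ => (-(a^2)) * Complex.exp ((2 * (1:ℤ) * Complex.I) * θ))
      volume (-Real.pi) Real.pi := ((continuous_const.mul (cont _)).intervalIntegrable _ _)
  have i2 : IntervalIntegrable (fun θ : ℝ => (-(b^2)) * Complex.exp ((2 * (-1:ℤ) * Complex.I) * θ))
      volume (-Real.pi) Real.pi := ((continuous_const.mul (cont _)).intervalIntegrable _ _)
  have i3 : IntervalIntegrable (fun _ : ℝ => 2 * a * b) volume (-Real.pi) Real.pi :=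
    intervalIntegrable_const
  rw [hcongr, intervalIntegral.integral_add (i1.add i2) i3,
    intervalIntegral.integral_add i1 i2,
    intervalIntegral.integral_const_mul, intervalIntegral.integral_const_mul,
    integral_cexp_two 1 one_ne_zero, integral_cexp_two (-1) (by norm_num),
    intervalIntegral.integral_const]
  have hπ : (Real.pi : ℂ) ≠ 0 := by
    exact_mod_cast Real.pi_ne_zero
  simp only [mul_zero, zero_add, sub_neg_eq_add]
  rw [Complex.real_smul]
  push_cast
  field_simp
  ring
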